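/- arXiv:1006.3203 — 2 statements merged into one kernel-verified Lean document; each statement's English description precedes it below -/
import Mathlib

section
/- Let T : X → X be an invertible measure-preserving transformation of a probability space and b : X → (0,∞) measurable. If the function x ↦ log b(T(x)) − log b(x) is bounded below (or more generally if its negative part is integrable) and μ is T-invariant and b is measurable, then lim_{n→±∞} (1/n) log b(T^n x) = 0 for μ-almost every x, i.e. b is tempered on a full measure set. -/
open MeasureTheory Real Filter

set_option linter.unusedSectionVars false

section Mane

variable {X : Type*} [MeasurableSpace X] {μ : Measure X} [IsProbabilityMeasure μ]
variable {T : X → X}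

/-- Iterated maximum of Birkhoff sums: `maneMaxS T ψ N x = max_{1 ≤ n ≤ N+1} S_n ψ x`. -/
noncomputable def maneMaxS (T : X → X) (ψ : X → ℝ) : ℕ → X → ℝ
  | 0 => ψ
  | (N+1) => fun x => ψ x + max (maneMaxS T ψ N (T x)) 0

lemma maneMaxS_succ (T : X → X) (ψ : X → ℝ) (N : ℕ) (x : X) :
    maneMaxS T ψ (N+1) x = ψ x + max (maneMaxS T ψ N (T x)) 0 := rfl

lemma maneMaxS_measurable (hT : Measurable T) {ψ : X → ℝ} (hm : Measurable ψ) (N : ℕ) :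
    Measurable (maneMaxS T ψ N) := by
  induction N with
  | zero => exact hm
  | succ N ih => exact hm.add ((ih.comp hT).max measurable_const)

lemma maneMaxS_integrable (hT : MeasurePreserving T μ μ) {ψ : X → ℝ} (hm : Measurable ψ)
    (hi : Integrable ψ μ) (N : ℕ) : Integrable (maneMaxS T ψ N) μ := by
  induction N with
  | zero => exact hi
  | succ N ih =>
    have h1 : Integrable (maneMaxS T ψ N ∘ T) μ :=
      (hT.integrable_comp (maneMaxS_measurable hT.measurable hm N).aestronglyMeasurable).2 ih
    exact hi.add h1.pos_part

lemma maneMaxS_mono (T : X → X) (ψ : X → ℝ) (N : ℕ) (x : X) :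
    maneMaxS T ψ N x ≤ maneMaxS T ψ (N+1) x := by
  induction N generalizing x with
  | zero =>
    show ψ x ≤ ψ x + max (ψ (T x)) 0
    linarith [le_max_right (ψ (T x)) (0:ℝ)]
  | succ N ih =>
    show ψ x + max (maneMaxS T ψ N (T x)) 0 ≤ ψ x + max (maneMaxS T ψ (N+1) (T x)) 0
    exact add_le_add le_rfl (max_le_max (ih (T x)) le_rfl)

lemma maneMaxS_le (T : X → X) (ψ : X → ℝ) (N : ℕ) (x : X) :
    maneMaxS T ψ N x ≤ ψ x + max (maneMaxS T ψ N (T x)) 0 := by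
  cases N with
  | zero =>
    show ψ x ≤ ψ x + max (ψ (T x)) 0
    linarith [le_max_right (ψ (T x)) (0:ℝ)]
  | succ N =>
    rw [maneMaxS_succ]
    have := maneMaxS_mono T ψ N (T x)
    gcongr

lemma maneMaxS_exists (T : X → X) (ψ : X → ℝ) (N : ℕ) (x : X) :
    ∃ n, 1 ≤ n ∧ maneMaxS T ψ N x ≤ birkhoffSum T ψ n x := by
  induction N generalizing x with
  | zero => exact ⟨1, le_rfl, by simp [maneMaxS, birkhoffSum_one]⟩
  | succ N ih =>
    rcases le_or_gt (maneMaxS T ψ N (T x)) 0 with h | h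
    · exact ⟨1, le_rfl, by simp [maneMaxS_succ, birkhoffSum_one, max_eq_right h]⟩
    · obtain ⟨m, hm1, hm⟩ := ih (T x)
      refine ⟨m + 1, by omega, ?_⟩
      rw [birkhoffSum_succ' T ψ m x, maneMaxS_succ, max_eq_left h.le]
      linarith

lemma maneMaxS_le_of_le (T : X → X) (ψ : X → ℝ) {N M : ℕ} (h : N ≤ M) (x : X) :
    maneMaxS T ψ N x ≤ maneMaxS T ψ M x := by
  induction M, h using Nat.le_induction with
  | base => exact le_rfl
  | succ M hM ih => exact ih.trans (maneMaxS_mono T ψ M x)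

lemma birkhoffSum_le_maneMaxS (T : X → X) (ψ : X → ℝ) (N n : ℕ) (x : X)
    (h1 : 1 ≤ n) (h2 : n ≤ N + 1) : birkhoffSum T ψ n x ≤ maneMaxS T ψ N x := by
  induction N generalizing n x with
  | zero =>
    interval_cases n
    simp [maneMaxS, birkhoffSum_one]
  | succ N ih =>
    match n, h1 with
    | 1, _ =>
      rw [birkhoffSum_one, maneMaxS_succ]
      linarith [le_max_right (maneMaxS T ψ N (T x)) (0:ℝ)]
    | (m+2), _ =>
      rw [show m + 2 = (m+1) + 1 from rfl, birkhoffSum_succ' T ψ (m+1) x, maneMaxS_succ]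
      have h4 := ih (m+1) (T x) (by omega) (by omega)
      have h3 := le_max_left (maneMaxS T ψ N (T x)) (0:ℝ)
      linarith

/-- Hopf's maximal ergodic lemma. -/
lemma hopf_maximal (hT : MeasurePreserving T μ μ) {ψ : X → ℝ} (hm : Measurable ψ)
    (hi : Integrable ψ μ) :
    0 ≤ ∫ x in {x | ∃ n, 1 ≤ n ∧ 0 < birkhoffSum T ψ n x}, ψ x ∂μ := by
  have hTm := hT.measurable
  set E : ℕ → Set X := fun N => {x | 0 < maneMaxS T ψ N x} with hE
  have hEm : ∀ N, MeasurableSet (E N) :=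
    fun N => measurableSet_lt measurable_const (maneMaxS_measurable hTm hm N)
  have hEmono : Monotone E := fun N M hNM x hx =>
    lt_of_lt_of_le hx (maneMaxS_le_of_le T ψ hNM x)
  have hEU : (⋃ N, E N) = {x | ∃ n, 1 ≤ n ∧ 0 < birkhoffSum T ψ n x} := by
    ext x
    simp only [Set.mem_iUnion, hE, Set.mem_setOf_eq]
    constructor
    · rintro ⟨N, hN⟩
      obtain ⟨n, hn1, hn⟩ := maneMaxS_exists T ψ N x
      exact ⟨n, hn1, lt_of_lt_of_le hN hn⟩
    · rintro ⟨n, hn1, hn⟩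
      refine ⟨n - 1, lt_of_lt_of_le hn (birkhoffSum_le_maneMaxS T ψ (n-1) n x hn1 (by omega))⟩
  have key : ∀ N, 0 ≤ ∫ x in E N, ψ x ∂μ := by
    intro N
    set g : X → ℝ := fun x => max (maneMaxS T ψ N x) 0 with hg
    have hgm : Measurable g := (maneMaxS_measurable hTm hm N).max measurable_const
    have hgi : Integrable g μ := (maneMaxS_integrable hT hm hi N).pos_part
    have hgTi : Integrable (fun x => g (T x)) μ :=
      (hT.integrable_comp hgm.aestronglyMeasurable).2 hgi
    have h1 : ∀ x ∈ E N, g x - g (T x) ≤ ψ x := by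
      intro x hx
      have h2 := maneMaxS_le T ψ N x
      have h3 : g x = maneMaxS T ψ N x := max_eq_left (le_of_lt hx)
      simp only [hg]
      linarith
    have h2 : ∫ x in E N, (g x - g (T x)) ∂μ ≤ ∫ x in E N, ψ x ∂μ :=
      setIntegral_mono_on (hgi.sub hgTi).integrableOn hi.integrableOn (hEm N) h1
    have h3 : ∫ x in E N, (g x - g (T x)) ∂μ
        = ∫ x in E N, g x ∂μ - ∫ x in E N, g (T x) ∂μ :=
      integral_sub hgi.integrableOn hgTi.integrableOn
    have h4 : ∫ x in E N, g x ∂μ = ∫ x, g x ∂μ := by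
      rw [← integral_add_compl (hEm N) hgi]
      have : ∫ x in (E N)ᶜ, g x ∂μ = 0 := by
        rw [setIntegral_congr_fun (hEm N).compl (g := fun _ => (0:ℝ))]
        · simp
        · intro x hx
          simp only [hE, Set.mem_compl_iff, Set.mem_setOf_eq, not_lt] at hx
          exact max_eq_right hx
      linarith
    have h5 : ∫ x in E N, g (T x) ∂μ ≤ ∫ x, g (T x) ∂μ :=
      setIntegral_le_integral hgTi (Eventually.of_forall fun x => le_max_right _ _)
    have h6 : ∫ x, g (T x) ∂μ = ∫ x, g x ∂μ := by
      rw [← integral_map hTm.aemeasurable (hT.map_eq ▸ hgm.aestronglyMeasurable), hT.map_eq]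
    linarith
  have hlim := tendsto_setIntegral_of_monotone hEm hEmono hi.integrableOn
  rw [hEU] at hlim
  exact ge_of_tendsto' hlim key





lemma mane_trunc_lower {c u v : ℝ} (hc0 : 0 ≤ c) (K : ℕ) (h : -c ≤ u - v) :
    -c ≤ max (min u (K:ℝ)) (-(K:ℝ)) - max (min v (K:ℝ)) (-(K:ℝ)) := by
  have hK : (0:ℝ) ≤ (K:ℝ) := Nat.cast_nonneg K
  simp only [min_def, max_def]
  split_ifs <;> linarith

lemma mane_trunc_upper {u v : ℝ} (K : ℕ) :
    max (min u (K:ℝ)) (-(K:ℝ)) - max (min v (K:ℝ)) (-(K:ℝ)) ≤ max (u - v) 0 := by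
  have hK : (0:ℝ) ≤ (K:ℝ) := Nat.cast_nonneg K
  have h1 := le_max_left (u - v) (0:ℝ)
  have h2 := le_max_right (u - v) (0:ℝ)
  simp only [min_def, max_def]
  split_ifs <;> linarith

/-- On an invariant set, the coboundary `f ∘ T - f` (bounded below) is integrable with
integral zero. -/
lemma mane_integral_coboundary (hT : MeasurePreserving T μ μ) {f : X → ℝ} (hf : Measurable f)
    {c : ℝ} (hc0 : 0 ≤ c) (hc : ∀ x, -c ≤ f (T x) - f x)
    {A : Set X} (hA : MeasurableSet A) (hAinv : ∀ x, T x ∈ A ↔ x ∈ A) :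
    IntegrableOn (fun x => f (T x) - f x) A μ ∧ ∫ x in A, (f (T x) - f x) ∂μ = 0 := by
  have hTm := hT.measurable
  set φ : X → ℝ := fun x => f (T x) - f x with hφ
  have hφm : Measurable φ := (hf.comp hTm).sub hf
  set fK : ℕ → X → ℝ := fun K x => max (min (f x) (K:ℝ)) (-(K:ℝ)) with hfK
  set φK : ℕ → X → ℝ := fun K x => fK K (T x) - fK K x with hφK
  have hfKm : ∀ K, Measurable (fK K) := fun K => (hf.min measurable_const).max measurable_const
  have hfKb : ∀ K x, ‖fK K x‖ ≤ (K:ℝ) := by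
    intro K x
    have hK : (0:ℝ) ≤ (K:ℝ) := Nat.cast_nonneg K
    rw [Real.norm_eq_abs, abs_le]
    constructor
    · exact le_max_right _ _
    · exact max_le ((min_le_right _ _)) (by linarith)
  have hfKi : ∀ K, Integrable (fK K) μ :=
    fun K => (integrable_const (K:ℝ)).mono' (hfKm K).aestronglyMeasurable
      (Eventually.of_forall (hfKb K))
  have hfKTi : ∀ K, Integrable (fun x => fK K (T x)) μ :=
    fun K => (hT.integrable_comp (hfKm K).aestronglyMeasurable).2 (hfKi K)
  have hφKm : ∀ K, Measurable (φK K) := fun K => ((hfKm K).comp hTm).sub (hfKm K)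
  have hφKi : ∀ K, Integrable (φK K) μ := fun K => (hfKTi K).sub (hfKi K)
  have t1 : ∀ K x, -c ≤ φK K x := fun K x => mane_trunc_lower hc0 K (hc x)
  have t2 : ∀ K x, φK K x ≤ max (φ x) 0 := fun K x => mane_trunc_upper K
  -- pointwise convergence
  have hKlim : ∀ x, Tendsto (fun K => φK K x) atTop (nhds (φ x)) := by
    intro x
    refine tendsto_const_nhds.congr' ?_
    have hb : ∀ y : X, ∀ᶠ K : ℕ in atTop, fK K y = f y := by
      intro y
      filter_upwards [eventually_ge_atTop ⌈|f y|⌉₊] with K hK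
      have h1 : |f y| ≤ (K:ℝ) := (Nat.le_ceil _).trans (Nat.cast_le.2 hK)
      rw [abs_le] at h1
      simp only [hfK]
      rw [min_eq_left h1.2, max_eq_left (by linarith)]
    filter_upwards [hb x, hb (T x)] with K h1 h2
    simp only [hφK, h1, h2, hφ]
  -- integral of truncated coboundary over A is zero
  have hzero : ∀ K, ∫ x in A, φK K x ∂μ = 0 := by
    intro K
    have hind : ∀ x, A.indicator (fun y => fK K (T y)) x = A.indicator (fK K) (T x) := by
      intro x
      by_cases hx : x ∈ A
      · rw [Set.indicator_of_mem hx, Set.indicator_of_mem ((hAinv x).2 hx)]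
      · rw [Set.indicator_of_notMem hx,
          Set.indicator_of_notMem (fun h => hx ((hAinv x).1 h))]
    have step : ∫ x in A, fK K (T x) ∂μ = ∫ x in A, fK K x ∂μ := by
      rw [← integral_indicator hA, ← integral_indicator hA]
      calc ∫ x, A.indicator (fun y => fK K (T y)) x ∂μ
          = ∫ x, A.indicator (fK K) (T x) ∂μ := by simp_rw [hind]
        _ = ∫ y, A.indicator (fK K) y ∂μ := by
            rw [← integral_map hTm.aemeasurable
              (hT.map_eq ▸ ((hfKm K).indicator hA).aestronglyMeasurable), hT.map_eq]
    rw [integral_sub (hfKTi K).integrableOn (hfKi K).integrableOn, step, sub_self]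
  -- Fatou: φ + c has finite integral on A
  have fatou : ∫⁻ x in A, ENNReal.ofReal (φ x + c) ∂μ ≤ ENNReal.ofReal c := by
    have hle : ∀ K : ℕ, ∫⁻ x in A, ENNReal.ofReal (φK K x + c) ∂μ
        = ENNReal.ofReal (c * (μ A).toReal) := by
      intro K
      have hic : IntegrableOn (fun x => φK K x + c) A μ :=
        ((hφKi K).integrableOn).add (integrableOn_const (measure_ne_top μ A))
      rw [← ofReal_integral_eq_lintegral_ofReal hic
        (ae_of_all _ fun x => show (0:ℝ) ≤ φK K x + c by linarith [t1 K x])]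
      congr 1
      rw [integral_add ((hφKi K).integrableOn) (integrableOn_const (measure_ne_top μ A)),
        hzero K, setIntegral_const, zero_add, smul_eq_mul, mul_comm, Measure.real]
    have h1 : ∫⁻ x in A, ENNReal.ofReal (φ x + c) ∂μ
        ≤ liminf (fun K : ℕ => ∫⁻ x in A, ENNReal.ofReal (φK K x + c) ∂μ) atTop := by
      have h2 : ∀ x, ENNReal.ofReal (φ x + c)
          = liminf (fun K : ℕ => ENNReal.ofReal (φK K x + c)) atTop := by
        intro x
        exact ((ENNReal.tendsto_ofReal ((hKlim x).add_const c)).liminf_eq).symm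
      calc ∫⁻ x in A, ENNReal.ofReal (φ x + c) ∂μ
          = ∫⁻ x in A, liminf (fun K : ℕ => ENNReal.ofReal (φK K x + c)) atTop ∂μ := by
            exact lintegral_congr fun x => h2 x
        _ ≤ _ := lintegral_liminf_le
            (fun K => ENNReal.measurable_ofReal.comp ((hφKm K).add_const c))
    rw [liminf_congr (Eventually.of_forall hle), liminf_const] at h1
    refine h1.trans (ENNReal.ofReal_le_ofReal ?_)
    calc c * (μ A).toReal ≤ c * 1 := by
          refine mul_le_mul_of_nonneg_left ?_ hc0
          rw [← ENNReal.toReal_one]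
          exact ENNReal.toReal_mono ENNReal.one_ne_top prob_le_one
      _ = c := mul_one c
  have hIntc : IntegrableOn (fun x => φ x + c) A μ := by
    refine ⟨(hφm.add_const c).aestronglyMeasurable.restrict, ?_⟩
    rw [hasFiniteIntegral_iff_norm]
    have : ∀ x, ENNReal.ofReal ‖φ x + c‖ = ENNReal.ofReal (φ x + c) := by
      intro x
      rw [Real.norm_eq_abs, abs_of_nonneg (show (0:ℝ) ≤ φ x + c by
        have := hc x; simp only [hφ]; linarith)]
    simp_rw [this]
    exact lt_of_le_of_lt fatou ENNReal.ofReal_lt_top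
  have hInt : IntegrableOn φ A μ := by
    have h2 : IntegrableOn (fun x => (φ x + c) - c) A μ :=
      hIntc.sub (integrableOn_const (measure_ne_top μ A) :
        IntegrableOn (fun _ => c) A μ)
    simpa using h2
  -- dominated convergence
  have hDCT : Tendsto (fun K => ∫ x in A, φK K x ∂μ) atTop (nhds (∫ x in A, φ x ∂μ)) := by
    refine tendsto_integral_of_dominated_convergence (fun x => max (φ x) 0 + c)
      (fun K => (hφKm K).aestronglyMeasurable.restrict) ?_ ?_ ?_
    · exact hInt.pos_part.add (integrableOn_const (measure_ne_top μ A))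
    · intro K
      refine Eventually.of_forall fun x => ?_
      rw [Real.norm_eq_abs, abs_le]
      constructor
      · show -(max (φ x) 0 + c) ≤ φK K x
        have := t1 K x; have := le_max_right (φ x) 0; linarith
      · show φK K x ≤ max (φ x) 0 + c
        have := t2 K x; linarith
    · exact Eventually.of_forall hKlim
  have hfinal : ∫ x in A, φ x ∂μ = 0 := by
    have h0 : Tendsto (fun K : ℕ => ∫ x in A, φK K x ∂μ) atTop (nhds 0) := by
      simp_rw [hzero]; exact tendsto_const_nhds
    exact tendsto_nhds_unique hDCT h0
  exact ⟨hInt, hfinal⟩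



section Mane3

variable {X : Type*} [MeasurableSpace X] {μ : Measure X} [IsProbabilityMeasure μ]
variable {T : X → X}

lemma mane_birkhoffSum_measurable (hT : Measurable T) {ψ : X → ℝ} (hm : Measurable ψ) (n : ℕ) :
    Measurable (birkhoffSum T ψ n) :=
  Finset.measurable_sum _ fun k _ => hm.comp (hT.iterate k)

lemma mane_iterate_mem {G : Set X} (hGinv : ∀ x, T x ∈ G ↔ x ∈ G) (k : ℕ) (x : X) :
    T^[k] x ∈ G ↔ x ∈ G := by
  induction k generalizing x with
  | zero => rfl
  | succ k ih =>
    rw [Function.iterate_succ_apply' ]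
    rw [hGinv (T^[k] x), ih]

/-- The set where Birkhoff sums of `ψ` frequently exceed a slope `> α` is null,
provided `ψ` has zero integral on every invariant set. -/
lemma mane_bad_set_null (hT : MeasurePreserving T μ μ) {ψ : X → ℝ} (hm : Measurable ψ)
    (hi : Integrable ψ μ)
    (hzero : ∀ A : Set X, MeasurableSet A → (∀ x, T x ∈ A ↔ x ∈ A) → ∫ x in A, ψ x ∂μ = 0)
    {α : ℝ} (hα : 0 < α) :
    μ {x | ∃ β : ℚ, α < (β:ℝ) ∧ ∀ N : ℕ, ∃ n, N ≤ n ∧ (β:ℝ) * n < birkhoffSum T ψ n x} = 0 := by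
  have hTm := hT.measurable
  set G : Set X :=
    {x | ∃ β : ℚ, α < (β:ℝ) ∧ ∀ N : ℕ, ∃ n, N ≤ n ∧ (β:ℝ) * n < birkhoffSum T ψ n x} with hGdef
  have hSm : ∀ n, Measurable (birkhoffSum T ψ n) := mane_birkhoffSum_measurable hTm hm
  have hG : MeasurableSet G := by
    have : G = ⋃ (β : ℚ), ⋃ (_ : α < (β:ℝ)), ⋂ N : ℕ, ⋃ n : ℕ, ⋃ (_ : N ≤ n),
        {x | (β:ℝ) * n < birkhoffSum T ψ n x} := by
      ext x
      simp only [hGdef, Set.mem_setOf_eq, Set.mem_iUnion, Set.mem_iInter, exists_prop]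
    rw [this]
    refine MeasurableSet.iUnion fun β => MeasurableSet.iUnion fun _ =>
      MeasurableSet.iInter fun N => MeasurableSet.iUnion fun n => MeasurableSet.iUnion fun _ => ?_
    exact measurableSet_lt measurable_const (hSm n)
  -- invariance
  have hGinv : ∀ x, T x ∈ G ↔ x ∈ G := by
    intro x
    constructor
    · rintro ⟨β, hβ, hfreq⟩
      obtain ⟨β', hβ'1, hβ'2⟩ := exists_rat_btwn hβ
      refine ⟨β', hβ'1, fun N => ?_⟩
      obtain ⟨N₀, hN₀⟩ := exists_nat_ge (((β':ℝ) - ψ x) / ((β:ℝ) - β'))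
      obtain ⟨n, hn1, hn2⟩ := hfreq (max N N₀)
      refine ⟨n + 1, by omega, ?_⟩
      rw [birkhoffSum_succ' T ψ n x]
      have hd : (0:ℝ) < (β:ℝ) - β' := by linarith
      have hN₀n : (((β':ℝ) - ψ x) / ((β:ℝ) - β')) ≤ n := by
        refine hN₀.trans ?_
        exact_mod_cast Nat.le_of_lt_succ (by omega : N₀ < n + 1)
      rw [div_le_iff₀ hd] at hN₀n
      push_cast
      nlinarith
    · rintro ⟨β, hβ, hfreq⟩
      obtain ⟨β', hβ'1, hβ'2⟩ := exists_rat_btwn hβ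
      refine ⟨β', hβ'1, fun N => ?_⟩
      obtain ⟨N₀, hN₀⟩ := exists_nat_ge ((ψ x - (β':ℝ)) / ((β:ℝ) - β'))
      obtain ⟨n, hn1, hn2⟩ := hfreq (max (N + 1) (N₀ + 1))
      obtain ⟨m, rfl⟩ : ∃ m, n = m + 1 := ⟨n - 1, by omega⟩
      refine ⟨m, by omega, ?_⟩
      rw [birkhoffSum_succ' T ψ m x] at hn2
      have hd : (0:ℝ) < (β:ℝ) - β' := by linarith
      have hN₀n : ((ψ x - (β':ℝ)) / ((β:ℝ) - β')) ≤ m + 1 := by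
        refine hN₀.trans ?_
        have : (N₀ : ℝ) ≤ (m+1 : ℕ) := by exact_mod_cast (by omega : N₀ ≤ m + 1)
        push_cast at this ⊢
        linarith
      rw [div_le_iff₀ hd] at hN₀n
      push_cast at hn2 ⊢
      nlinarith
  -- Hopf applied to the indicator function
  set Ψ : X → ℝ := G.indicator (fun x => ψ x - α) with hΨdef
  have hΨm : Measurable Ψ := (hm.sub measurable_const).indicator hG
  have hΨi : Integrable Ψ μ := (hi.sub (integrable_const α)).indicator hG
  have hSΨ : ∀ n x, x ∈ G → birkhoffSum T Ψ n x = birkhoffSum T ψ n x - n * α := by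
    intro n x hx
    have hterm : ∀ k, Ψ (T^[k] x) = ψ (T^[k] x) - α := fun k => by
      rw [hΨdef, Set.indicator_of_mem ((mane_iterate_mem hGinv k x).2 hx)]
    have h2 : ∑ k ∈ Finset.range n, (ψ (T^[k] x) - α) = birkhoffSum T ψ n x - n * α := by
      rw [Finset.sum_sub_distrib, Finset.sum_const, Finset.card_range, nsmul_eq_mul]
      rfl
    rw [← h2]
    exact Finset.sum_congr rfl fun k _ => hterm k
  have hEG : {x | ∃ n, 1 ≤ n ∧ 0 < birkhoffSum T Ψ n x} = G := by
    ext x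
    simp only [Set.mem_setOf_eq]
    constructor
    · rintro ⟨n, hn1, hn2⟩
      by_contra hx
      have : ∀ k, Ψ (T^[k] x) = 0 := fun k => by
        rw [hΨdef, Set.indicator_of_notMem (fun h => hx ((mane_iterate_mem hGinv k x).1 h))]
      have : birkhoffSum T Ψ n x = 0 := by
        unfold birkhoffSum
        exact Finset.sum_eq_zero fun k _ => this k
      linarith
    · intro hx
      obtain ⟨β, hβ, hfreq⟩ := id hx
      obtain ⟨n, hn1, hn2⟩ := hfreq 1
      refine ⟨n, hn1, ?_⟩
      rw [hSΨ n x hx]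
      have hn' : (1:ℝ) ≤ n := by exact_mod_cast hn1
      nlinarith
  have hhopf := hopf_maximal hT hΨm hΨi
  rw [hEG] at hhopf
  have h1 : ∫ x in G, Ψ x ∂μ = ∫ x in G, (ψ x - α) ∂μ :=
    setIntegral_congr_fun hG fun x hx => by rw [hΨdef, Set.indicator_of_mem hx]
  have h2 : ∫ x in G, (ψ x - α) ∂μ = - (α * (μ G).toReal) := by
    rw [integral_sub hi.integrableOn (integrableOn_const (measure_ne_top μ G)),
      hzero G hG hGinv, setIntegral_const, smul_eq_mul, zero_sub, mul_comm, Measure.real]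
  rw [h1, h2] at hhopf
  have h3 : (μ G).toReal = 0 := by nlinarith [ENNReal.toReal_nonneg (a := μ G)]
  exact (ENNReal.toReal_eq_zero_iff _).1 h3 |>.resolve_right (measure_ne_top μ G)

lemma mane_telescope (T : X → X) (f : X → ℝ) (n : ℕ) (x : X) :
    birkhoffSum T (fun y => f (T y) - f y) n x = f (T^[n] x) - f x := by
  have h := Finset.sum_range_sub (fun k => f (T^[k] x)) n
  simp only [Function.iterate_zero_apply] at h
  rw [← h]
  exact Finset.sum_congr rfl fun k _ => by simp only [Function.iterate_succ_apply']

/-- Forward Mañé lemma. -/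
lemma mane_forward (hT : MeasurePreserving T μ μ) {f : X → ℝ} (hf : Measurable f)
    {c : ℝ} (hc0 : 0 ≤ c) (hc : ∀ x, -c ≤ f (T x) - f x) :
    ∀ᵐ x ∂μ, Tendsto (fun n : ℕ => (1/(n:ℝ)) * f (T^[n] x)) atTop (nhds 0) := by
  have hTm := hT.measurable
  set φ : X → ℝ := fun x => f (T x) - f x with hφdef
  have hφm : Measurable φ := (hf.comp hTm).sub hf
  have hcob := fun (A : Set X) (hA : MeasurableSet A) (hAinv : ∀ x, T x ∈ A ↔ x ∈ A) =>
    mane_integral_coboundary hT hf hc0 hc hA hAinv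
  have hφi : Integrable φ μ := by
    have := (hcob Set.univ MeasurableSet.univ (fun x => by simp)).1
    rwa [integrableOn_univ] at this
  have hzero : ∀ A : Set X, MeasurableSet A → (∀ x, T x ∈ A ↔ x ∈ A) →
      ∫ x in A, φ x ∂μ = 0 := fun A hA hAinv => (hcob A hA hAinv).2
  have hzero' : ∀ A : Set X, MeasurableSet A → (∀ x, T x ∈ A ↔ x ∈ A) →
      ∫ x in A, (-φ) x ∂μ = 0 := by
    intro A hA hAinv
    simp only [Pi.neg_apply]
    rw [integral_neg, hzero A hA hAinv, neg_zero]
  have hSneg : ∀ n x, birkhoffSum T (-φ) n x = - birkhoffSum T φ n x := by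
    intro n x
    simp [birkhoffSum, Finset.sum_neg_distrib]
  have hεpos : ∀ k : ℕ, (0:ℝ) < 1/((k:ℝ)+1) := by
    intro k
    positivity
  have hbadp : ∀ k : ℕ, μ {x | ∃ β : ℚ, (1/((k:ℝ)+1)) < (β:ℝ) ∧
      ∀ N : ℕ, ∃ n, N ≤ n ∧ (β:ℝ) * n < birkhoffSum T φ n x} = 0 :=
    fun k => mane_bad_set_null hT hφm hφi hzero (hεpos k)
  have hbadm : ∀ k : ℕ, μ {x | ∃ β : ℚ, (1/((k:ℝ)+1)) < (β:ℝ) ∧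
      ∀ N : ℕ, ∃ n, N ≤ n ∧ (β:ℝ) * n < birkhoffSum T (-φ) n x} = 0 :=
    fun k => mane_bad_set_null hT hφm.neg hφi.neg hzero' (hεpos k)
  have h1 : ∀ᵐ x ∂μ, ∀ k : ℕ, x ∉ {x | ∃ β : ℚ, (1/((k:ℝ)+1)) < (β:ℝ) ∧
      ∀ N : ℕ, ∃ n, N ≤ n ∧ (β:ℝ) * n < birkhoffSum T φ n x} :=
    ae_all_iff.2 fun k => measure_eq_zero_iff_ae_notMem.1 (hbadp k)
  have h2 : ∀ᵐ x ∂μ, ∀ k : ℕ, x ∉ {x | ∃ β : ℚ, (1/((k:ℝ)+1)) < (β:ℝ) ∧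
      ∀ N : ℕ, ∃ n, N ≤ n ∧ (β:ℝ) * n < birkhoffSum T (-φ) n x} :=
    ae_all_iff.2 fun k => measure_eq_zero_iff_ae_notMem.1 (hbadm k)
  filter_upwards [h1, h2] with x hx1 hx2
  have htend : Tendsto (fun n : ℕ => (1/(n:ℝ)) * birkhoffSum T φ n x) atTop (nhds 0) := by
    rw [NormedAddCommGroup.tendsto_nhds_zero]
    intro ε hε
    obtain ⟨k, hk⟩ := exists_nat_one_div_lt (show (0:ℝ) < ε/2 by linarith)
    obtain ⟨β, hβ1, hβ2⟩ := exists_rat_btwn hk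
    have hup : ∃ N : ℕ, ∀ n, N ≤ n → birkhoffSum T φ n x ≤ (β:ℝ) * n := by
      have hnot := hx1 k
      push_neg at hnot
      exact hnot β hβ1
    have hdown : ∃ N : ℕ, ∀ n, N ≤ n → -(birkhoffSum T φ n x) ≤ (β:ℝ) * n := by
      have hnot := hx2 k
      push_neg at hnot
      obtain ⟨N, hN⟩ := hnot β hβ1
      refine ⟨N, fun n hn => ?_⟩
      have := hN n hn
      rw [hSneg n x] at this
      linarith
    obtain ⟨N1, hN1⟩ := hup
    obtain ⟨N2, hN2⟩ := hdown
    filter_upwards [eventually_ge_atTop (max (max N1 N2) 1)] with n hn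
    have hn1 : N1 ≤ n := le_trans (le_trans (le_max_left N1 N2) (le_max_left _ 1)) hn
    have hn2 : N2 ≤ n := le_trans (le_trans (le_max_right N1 N2) (le_max_left _ 1)) hn
    have hnn : 1 ≤ n := le_trans (le_max_right _ 1) hn
    have hnpos : (0:ℝ) < n := by exact_mod_cast hnn
    have habs : |birkhoffSum T φ n x| ≤ (β:ℝ) * n := by
      rw [abs_le]
      exact ⟨by linarith [hN2 n hn2], hN1 n hn1⟩
    rw [norm_mul, Real.norm_eq_abs, Real.norm_eq_abs, abs_of_pos (by positivity : (0:ℝ) < 1/(n:ℝ))]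
    calc (1/(n:ℝ)) * |birkhoffSum T φ n x| ≤ (1/(n:ℝ)) * ((β:ℝ) * n) := by
          exact mul_le_mul_of_nonneg_left habs (by positivity)
      _ = (β:ℝ) := by field_simp
      _ < ε := by linarith
  have hconst : Tendsto (fun n : ℕ => (1/(n:ℝ)) * f x) atTop (nhds 0) := by
    simpa using tendsto_one_div_atTop_nhds_zero_nat.mul_const (f x)
  have hsum := hconst.add htend
  rw [add_zero] at hsum
  refine hsum.congr fun n => ?_
  have ht := mane_telescope T f n x
  rw [← hφdef] at ht
  rw [ht]
  ring

end Mane3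

end Mane

/-- Mañé-type temperedness: if log b ∘ T − log b is bounded below, then b is tempered a.e. -/
theorem stmt_4 {X : Type*} [MeasurableSpace X]
    (μ : Measure X) [IsProbabilityMeasure μ]
    (T Tinv : X → X)
    (hT : MeasurePreserving T μ μ) (hTinv : MeasurePreserving Tinv μ μ)
    (hleft : Function.LeftInverse Tinv T) (hright : Function.RightInverse Tinv T)
    (b : X → ℝ) (hb_meas : Measurable b) (hb_pos : ∀ x, 0 < b x)
    (c : ℝ) (hbdd : ∀ x, -c ≤ Real.log (b (T x)) - Real.log (b x)) :
    ∀ᵐ x ∂μ,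
      Tendsto (fun n : ℕ => (1 / (n : ℝ)) * Real.log (b (T^[n] x))) atTop (nhds 0) ∧
      Tendsto (fun n : ℕ => (1 / (n : ℝ)) * Real.log (b (Tinv^[n] x))) atTop (nhds 0) := by
  classical
  have hf : Measurable (fun x => Real.log (b x)) := Real.measurable_log.comp hb_meas
  have hc0 : (0:ℝ) ≤ max c 0 := le_max_right c 0
  have hcf : ∀ x, -(max c 0) ≤ Real.log (b (T x)) - Real.log (b x) := fun x =>
    le_trans (neg_le_neg (le_max_left c 0)) (hbdd x)
  have fwd := mane_forward hT hf hc0 hcf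
  have hcb : ∀ x, -(max c 0) ≤ (-(Real.log (b (Tinv x)))) - (-(Real.log (b x))) := by
    intro x
    have h := hbdd (Tinv x)
    rw [hright x] at h
    have h2 : -(max c 0) ≤ -c := neg_le_neg (le_max_left c 0)
    linarith
  have bwd := mane_forward (T := Tinv) hTinv (f := fun x => -(Real.log (b x))) hf.neg hc0 hcb
  filter_upwards [fwd, bwd] with x hx1 hx2
  refine ⟨hx1, ?_⟩
  have h3 := hx2.neg
  simp only [neg_neg, neg_zero, neg_mul, mul_neg] at h3
  exact h3
end

section
/- Let (X, T, μ) be an ergodic invertible measure-preserving system on a probability space, let P = {P₁,…,P_j} be a finite measurable partition of X, and let Λ₁ ⊂ X be measurable with μ(Λ₁ ∩ P_i) > 0 for each i. Then for every ε > 0 and δ > 0 there exist an integer n₂ ≥ 1 and a measurable set Λ₂ with μ(Λ₂) > 1 − δ such that for every x ∈ Λ₂ and every n ≥ n₂ there exists k ∈ [n, n + εn] with T^k(x) ∈ Λ₁ ∩ P(x), where P(x) denotes the partition element containing x. -/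
set_option linter.unusedSectionVars false

open MeasureTheory Filter Set Function
open scoped ENNReal NNReal

namespace Stmt12Aux

variable {X : Type*} [MeasurableSpace X]

/-- First return time to `A` under `T` (0 if never returns). -/
noncomputable def rt (T : X → X) (A : Set X) (x : X) : ℕ :=
  sInf {m | 0 < m ∧ T^[m] x ∈ A}

theorem rt_eq_zero_iff {T : X → X} {A : Set X} {x : X} :
    rt T A x = 0 ↔ ∀ m, 0 < m → T^[m] x ∉ A := by
  rw [rt, Nat.sInf_eq_zero]
  constructor
  · rintro (⟨h, _⟩ | h)
    · exact absurd h (lt_irrefl 0)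
    · intro m hm hmem
      have : m ∈ ({m | 0 < m ∧ T^[m] x ∈ A}) := ⟨hm, hmem⟩
      rw [h] at this
      exact this
  · intro h
    right
    ext m
    simp only [mem_setOf_eq, mem_empty_iff_false, iff_false, not_and]
    exact fun hm => h m hm

theorem rt_le {T : X → X} {A : Set X} {x : X} {m : ℕ} (hm : 0 < m) (hA : T^[m] x ∈ A) :
    rt T A x ≤ m := Nat.sInf_le ⟨hm, hA⟩

theorem rt_pos {T : X → X} {A : Set X} {x : X} {m : ℕ} (hm : 0 < m) (hA : T^[m] x ∈ A) :
    0 < rt T A x := by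
  rcases (rt T A x).eq_zero_or_pos.symm with h | h
  · exact h
  · exact absurd hA (rt_eq_zero_iff.1 h m hm)

theorem rt_spec {T : X → X} {A : Set X} {x : X} (h : 0 < rt T A x) :
    T^[rt T A x] x ∈ A := by
  have hne : {m | 0 < m ∧ T^[m] x ∈ A}.Nonempty := by
    by_contra hc
    rw [not_nonempty_iff_eq_empty] at hc
    simp [rt, hc, Nat.sInf_empty] at h
  exact (Nat.sInf_mem hne).2

theorem rt_min {T : X → X} {A : Set X} {x : X} {l : ℕ} (hl : 0 < l) (hlt : l < rt T A x) :
    T^[l] x ∉ A := fun hA => absurd (rt_le hl hA) (by omega)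

theorem rt_eq_iff {T : X → X} {A : Set X} {x : X} {k : ℕ} (hk : 0 < k) :
    rt T A x = k ↔ T^[k] x ∈ A ∧ ∀ l, 0 < l → l < k → T^[l] x ∉ A := by
  constructor
  · rintro rfl
    exact ⟨rt_spec (by omega), fun l hl hlt => rt_min hl hlt⟩
  · rintro ⟨h1, h2⟩
    have h3 := rt_le hk h1
    have h4 := rt_pos hk h1
    rcases lt_or_eq_of_le h3 with h | h
    · exact absurd (rt_spec h4) (h2 _ h4 h)
    · exact h

theorem measurable_rt {T : X → X} {A : Set X} (hT : Measurable T) (hA : MeasurableSet A) :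
    Measurable (rt T A) := by
  apply measurable_to_nat
  intro x
  set k := rt T A x with hk
  rcases k.eq_zero_or_pos.symm with hpos | h0
  · have : rt T A ⁻¹' {k} = (T^[k] ⁻¹' A) ∩ ⋂ (l : ℕ) (_ : 0 < l) (_ : l < k), (T^[l] ⁻¹' A)ᶜ := by
      ext y
      simp only [mem_preimage, mem_singleton_iff, mem_inter_iff, mem_iInter, mem_compl_iff]
      rw [rt_eq_iff hpos]
    rw [this]
    exact ((hT.iterate k) hA).inter
      (MeasurableSet.iInter fun l => MeasurableSet.iInter fun _ =>
        MeasurableSet.iInter fun _ => ((hT.iterate l) hA).compl)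
  · rw [h0]
    have : rt T A ⁻¹' {0} = ⋂ (m : ℕ) (_ : 0 < m), (T^[m] ⁻¹' A)ᶜ := by
      ext y
      simp only [mem_preimage, mem_singleton_iff, mem_iInter, mem_compl_iff]
      exact rt_eq_zero_iff
    rw [this]
    exact MeasurableSet.iInter fun m => MeasurableSet.iInter fun _ => ((hT.iterate m) hA).compl

/-- Induced (first-return) map. -/
noncomputable def indMap (T : X → X) (A : Set X) (x : X) : X := T^[rt T A x] x

theorem measurable_indMap {T : X → X} {A : Set X} (hT : Measurable T) (hA : MeasurableSet A) :
    Measurable (indMap T A) := by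
  intro C hC
  have : indMap T A ⁻¹' C = ⋃ k : ℕ, (rt T A ⁻¹' {k}) ∩ (T^[k] ⁻¹' C) := by
    ext x
    simp only [mem_preimage, mem_iUnion, mem_inter_iff, mem_singleton_iff]
    constructor
    · intro h; exact ⟨rt T A x, rfl, h⟩
    · rintro ⟨k, rfl, h⟩; exact h
  rw [this]
  exact MeasurableSet.iUnion fun k =>
    ((measurable_rt hT hA) (measurableSet_singleton k)).inter ((hT.iterate k) hC)



variable {X : Type*} [MeasurableSpace X] {μ : Measure X} [IsProbabilityMeasure μ]
  {T Tinv : X → X} {A : Set X}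

theorem measurableSet_Ak (hT : Measurable T) (hA : MeasurableSet A) (k : ℕ) :
    MeasurableSet (A ∩ rt T A ⁻¹' {k}) :=
  hA.inter ((measurable_rt hT hA) (measurableSet_singleton k))

/-- Poincaré: the non-returning part of `A` is null. -/
theorem null_nonreturn (hT : MeasurePreserving T μ μ) (hA : MeasurableSet A) :
    μ (A ∩ rt T A ⁻¹' {0}) = 0 := by
  refine measure_mono_null ?_
    (hT.conservative.measure_mem_forall_ge_image_notMem_eq_zero hA.nullMeasurableSet 1)
  rintro x ⟨hxA, hx0⟩
  exact ⟨hxA, fun m hm => rt_eq_zero_iff.1 hx0 m hm⟩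

/-- Key disjointness step. -/
theorem key_disj (hright : Function.LeftInverse T Tinv) {x : X} {k l k' l' : ℕ}
    (hlk : l < k) (hlk' : l' < k') (hll' : l < l')
    (h1 : Tinv^[l] x ∈ A ∩ rt T A ⁻¹' {k}) (h2 : Tinv^[l'] x ∈ A ∩ rt T A ⁻¹' {k'}) : False := by
  have hy : rt T A (Tinv^[l'] x) = k' := h2.2
  have hstep : Tinv^[l'] x = Tinv^[l' - l] (Tinv^[l] x) := by
    rw [← Function.iterate_add_apply]
    congr 1
    omega
  have hT' : T^[l' - l] (Tinv^[l'] x) = Tinv^[l] x := by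
    rw [hstep, (hright.iterate (l' - l)) (Tinv^[l] x)]
  have hle : rt T A (Tinv^[l'] x) ≤ l' - l := by
    apply rt_le (by omega)
    rw [hT']
    exact h1.1
  omega

/-- Kac-type inequality: `∑ k k·μ(A_k) ≤ 1`. -/
theorem kac (hT : MeasurePreserving T μ μ) (hTinv : MeasurePreserving Tinv μ μ)
    (hright : Function.LeftInverse T Tinv) (hA : MeasurableSet A) :
    ∑' (k : ℕ), (k : ℝ≥0∞) * μ (A ∩ rt T A ⁻¹' {k}) ≤ 1 := by
  classical
  set C : ℕ × ℕ → Set X := fun p =>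
    if p.2 < p.1 then Tinv^[p.2] ⁻¹' (A ∩ rt T A ⁻¹' {p.1}) else ∅ with hC
  have hCmeas : ∀ p, MeasurableSet (C p) := by
    rintro ⟨k, l⟩
    by_cases h : l < k
    · simp only [hC, if_pos h]
      exact (hTinv.measurable.iterate l) (measurableSet_Ak hT.measurable hA k)
    · simp only [hC, if_neg h]
      exact MeasurableSet.empty
  have hdisj : Pairwise (Function.onFun Disjoint C) := by
    rintro ⟨k, l⟩ ⟨k', l'⟩ hne
    by_cases h : l < k
    · by_cases h' : l' < k'
      · simp only [Function.onFun, hC, if_pos h, if_pos h']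
        rw [Set.disjoint_left]
        intro x h1 h2
        simp only [mem_preimage] at h1 h2
        rcases lt_trichotomy l l' with hll | hll | hll
        · exact key_disj hright h h' hll h1 h2
        · subst hll
          have : k = k' := by
            have e1 := h1.2
            have e2 := h2.2
            simp only [mem_preimage, mem_singleton_iff] at e1 e2
            omega
          exact hne (by simp [this])
        · exact key_disj hright h' h hll h2 h1
      · simp [Function.onFun, hC, if_neg h']
    · simp [Function.onFun, hC, if_neg h]
  have hunion : μ (⋃ p, C p) ≤ 1 := by
    calc μ (⋃ p, C p) ≤ μ Set.univ := measure_mono (subset_univ _)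
    _ = 1 := measure_univ
  rw [measure_iUnion hdisj hCmeas] at hunion
  have hswap : ∑' (p : ℕ × ℕ), μ (C p) = ∑' (k : ℕ), ∑' (l : ℕ), μ (C (k, l)) :=
    ENNReal.tsum_prod (f := fun k l => μ (C (k, l)))
  rw [hswap] at hunion
  refine le_trans (le_of_eq ?_) hunion
  congr 1
  ext k
  have : ∀ l, l ∉ Finset.range k → μ (C (k, l)) = 0 := by
    intro l hl
    simp only [Finset.mem_range, not_lt] at hl
    simp [hC, Nat.not_lt.2 hl]
  rw [tsum_eq_sum this]
  have : ∀ l ∈ Finset.range k, μ (C (k, l)) = μ (A ∩ rt T A ⁻¹' {k}) := by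
    intro l hl
    simp only [Finset.mem_range] at hl
    simp only [hC, if_pos hl]
    exact (hTinv.iterate l).measure_preimage (measurableSet_Ak hT.measurable hA k).nullMeasurableSet
  rw [Finset.sum_congr rfl this, Finset.sum_const, Finset.card_range, nsmul_eq_mul]


/-- The induced map preserves measure of subsets of `A`. -/
theorem indMap_preserving (hT : MeasurePreserving T μ μ) (hTinv : MeasurePreserving Tinv μ μ)
    (hright : Function.LeftInverse T Tinv) (hA : MeasurableSet A)
    {B : Set X} (hB : MeasurableSet B) (hBA : B ⊆ A) :
    μ (A ∩ indMap T A ⁻¹' B) = μ B := by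
  classical
  set D : ℕ → Set X := fun k =>
    if 0 < k then B ∩ Tinv^[k] ⁻¹' (A ∩ rt T A ⁻¹' {k}) else ∅ with hD
  have hDmeas : ∀ k, MeasurableSet (D k) := by
    intro k
    by_cases h : 0 < k
    · simp only [hD, if_pos h]
      exact hB.inter ((hTinv.measurable.iterate k) (measurableSet_Ak hT.measurable hA k))
    · simp only [hD, if_neg h]; exact MeasurableSet.empty
  -- cancellation helper
  have hcanc : ∀ (a b : ℕ) (z : X), T^[a] (Tinv^[a + b] z) = Tinv^[b] z := by
    intro a b z
    have : Tinv^[a + b] z = Tinv^[a] (Tinv^[b] z) := by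
      rw [← Function.iterate_add_apply]
    rw [this, (hright.iterate a) (Tinv^[b] z)]
  -- the backward first-entrance identification
  have hDk : ∀ z ∈ B, 0 < rt Tinv A z → z ∈ D (rt Tinv A z) := by
    intro z hzB hpos
    set k := rt Tinv A z with hk
    have hyA : Tinv^[k] z ∈ A := rt_spec hpos
    have hback : T^[k] (Tinv^[k] z) = z := by
      have := hcanc k 0 z
      simpa using this
    have hle : rt T A (Tinv^[k] z) ≤ k := by
      apply rt_le hpos
      rw [hback]; exact hBA hzB
    have hge : rt T A (Tinv^[k] z) = k := by
      rcases lt_or_eq_of_le hle with hlt | he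
      · exfalso
        have hlpos : 0 < rt T A (Tinv^[k] z) := rt_pos hpos (by rw [hback]; exact hBA hzB)
        set l := rt T A (Tinv^[k] z) with hl
        have hlA : T^[l] (Tinv^[k] z) ∈ A := rt_spec hlpos
        have : T^[l] (Tinv^[k] z) = Tinv^[k - l] z := by
          have : k = l + (k - l) := by omega
          rw [show Tinv^[k] z = Tinv^[l + (k-l)] z by rw [← this]]
          exact hcanc l (k - l) z
        rw [this] at hlA
        exact (rt_min (T := Tinv) (by omega) (by omega)) hlA
      · exact he
    simp only [hD, if_pos hpos]
    exact ⟨hzB, by simp only [mem_preimage, mem_inter_iff, mem_singleton_iff]; exact ⟨hyA, hge⟩⟩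
  have hDsub : ∀ k, D k ⊆ B := by
    intro k
    by_cases h : 0 < k
    · simp only [hD, if_pos h]; exact inter_subset_left
    · simp only [hD, if_neg h]; exact empty_subset _
  have hkey : ∀ k k', 0 < k → 0 < k' → k < k' → Disjoint (D k) (D k') := by
    intro k k' hpos hpos' hlt
    simp only [hD, if_pos hpos, if_pos hpos']
    rw [Set.disjoint_left]
    rintro x ⟨_, hx1⟩ ⟨_, hx2⟩
    simp only [mem_preimage, mem_inter_iff, mem_singleton_iff] at hx1 hx2
    -- y = Tinv^[k'] x has rt = k', but T^[k'-k] y = Tinv^[k] x ∈ A with 0 < k'-k < k'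
    have hTy : T^[k' - k] (Tinv^[k'] x) = Tinv^[k] x := by
      rw [show Tinv^[k'] x = Tinv^[(k' - k) + k] x by congr 1; omega]
      exact hcanc (k' - k) k x
    have := rt_le (T := T) (x := Tinv^[k'] x) (m := k' - k) (by omega) (by rw [hTy]; exact hx1.1)
    omega
  have hDdisj : Pairwise (Function.onFun Disjoint D) := by
    intro k k' hne
    rcases Nat.eq_zero_or_pos k with h0 | hpos
    · simp [Function.onFun, hD, h0]
    rcases Nat.eq_zero_or_pos k' with h0' | hpos'
    · simp [Function.onFun, hD, h0']
    rcases lt_trichotomy k k' with h | h | h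
    · exact hkey k k' hpos hpos' h
    · exact absurd h hne
    · exact (hkey k' k hpos' hpos h).symm
  have hcover : μ (⋃ k, D k) = μ B := by
    apply le_antisymm (measure_mono (iUnion_subset hDsub))
    have hsub2 : B \ (⋃ k, D k) ⊆ {x ∈ A | ∀ m ≥ 1, Tinv^[m] x ∉ A} := by
      rintro z ⟨hzB, hznot⟩
      refine ⟨hBA hzB, fun m hm hmem => ?_⟩
      have hpos : 0 < rt Tinv A z := rt_pos (by omega) hmem
      exact hznot (mem_iUnion.2 ⟨rt Tinv A z, hDk z hzB hpos⟩)
    have hnull : μ (B \ ⋃ k, D k) = 0 :=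
      measure_mono_null hsub2
        (hTinv.conservative.measure_mem_forall_ge_image_notMem_eq_zero hA.nullMeasurableSet 1)
    calc μ B ≤ μ ((⋃ k, D k) ∪ (B \ ⋃ k, D k)) := measure_mono (fun z hz => by
            by_cases h : z ∈ ⋃ k, D k
            · exact Or.inl h
            · exact Or.inr ⟨hz, h⟩)
    _ ≤ μ (⋃ k, D k) + μ (B \ ⋃ k, D k) := measure_union_le _ _
    _ = μ (⋃ k, D k) := by rw [hnull, add_zero]
  -- decompose the left-hand side
  have hdecomp : A ∩ indMap T A ⁻¹' B = ⋃ k, (A ∩ rt T A ⁻¹' {k} ∩ T^[k] ⁻¹' B) := by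
    ext x
    simp only [mem_inter_iff, mem_preimage, mem_iUnion, mem_singleton_iff, indMap]
    constructor
    · rintro ⟨hxA, hxB⟩; exact ⟨rt T A x, ⟨hxA, rfl⟩, hxB⟩
    · rintro ⟨k, ⟨hxA, hk⟩, hxB⟩; exact ⟨hxA, by rw [hk]; exact hxB⟩
  have hpdisj : Pairwise (Function.onFun Disjoint
      (fun k => A ∩ rt T A ⁻¹' {k} ∩ T^[k] ⁻¹' B)) := by
    intro k k' hne
    rw [Function.onFun, Set.disjoint_left]
    rintro x ⟨⟨_, h1⟩, _⟩ ⟨⟨_, h2⟩, _⟩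
    simp only [mem_preimage, mem_singleton_iff] at h1 h2
    exact hne (h1 ▸ h2 ▸ rfl)
  have hpmeas : ∀ k, MeasurableSet (A ∩ rt T A ⁻¹' {k} ∩ T^[k] ⁻¹' B) := fun k =>
    (measurableSet_Ak hT.measurable hA k).inter ((hT.measurable.iterate k) hB)
  rw [hdecomp, measure_iUnion hpdisj hpmeas, ← hcover,
    measure_iUnion hDdisj hDmeas]
  congr 1
  ext k
  rcases Nat.eq_zero_or_pos k with h0 | hpos
  · subst h0
    have h1 : μ (A ∩ rt T A ⁻¹' {0} ∩ T^[0] ⁻¹' B) = 0 :=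
      measure_mono_null inter_subset_left (null_nonreturn hT hA)
    simp only [hD, lt_irrefl, if_neg (lt_irrefl 0)]
    rw [h1, measure_empty]
  · have : Tinv^[k] ⁻¹' (A ∩ rt T A ⁻¹' {k} ∩ T^[k] ⁻¹' B)
        = Tinv^[k] ⁻¹' (A ∩ rt T A ⁻¹' {k}) ∩ B := by
      ext z
      simp only [mem_preimage, mem_inter_iff, mem_singleton_iff]
      have : T^[k] (Tinv^[k] z) = z := by
        have := hcanc k 0 z; simpa using this
      rw [this]
    have hmp := (hTinv.iterate k).measure_preimage
      (s := A ∩ rt T A ⁻¹' {k} ∩ T^[k] ⁻¹' B) (hpmeas k).nullMeasurableSet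
    rw [← hmp, this]
    simp only [hD, if_pos hpos]
    rw [inter_comm]


theorem indMap_iter_preserving (hT : MeasurePreserving T μ μ)
    (hTinv : MeasurePreserving Tinv μ μ) (hright : Function.LeftInverse T Tinv)
    (hA : MeasurableSet A) (m : ℕ) {B : Set X} (hB : MeasurableSet B) (hBA : B ⊆ A) :
    μ (A ∩ (indMap T A)^[m] ⁻¹' B) = μ B := by
  induction m with
  | zero =>
    simp only [Function.iterate_zero, Set.preimage_id]
    rw [inter_eq_self_of_subset_right hBA]
  | succ m ih =>
    have hstep : A ∩ (indMap T A)^[m + 1] ⁻¹' B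
        = A ∩ indMap T A ⁻¹' ((indMap T A)^[m] ⁻¹' B) := by
      ext x
      simp only [mem_inter_iff, mem_preimage, Function.iterate_succ_apply]
    have hmeasSm : MeasurableSet ((indMap T A)^[m] ⁻¹' B) :=
      ((measurable_indMap hT.measurable hA).iterate m) hB
    set B' : Set X := A ∩ (indMap T A)^[m] ⁻¹' B with hB'
    have hB'meas : MeasurableSet B' := hA.inter hmeasSm
    have hE : μ (A ∩ indMap T A ⁻¹' ((indMap T A)^[m] ⁻¹' B))
        = μ (A ∩ indMap T A ⁻¹' B') := by
      apply le_antisymm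
      · have hdiff : (A ∩ indMap T A ⁻¹' ((indMap T A)^[m] ⁻¹' B)) \ (A ∩ indMap T A ⁻¹' B')
            ⊆ A ∩ rt T A ⁻¹' {0} := by
          rintro x ⟨⟨hxA, hx1⟩, hx2⟩
          refine ⟨hxA, ?_⟩
          simp only [mem_preimage, mem_singleton_iff]
          by_contra hr0
          have hpos : 0 < rt T A x := Nat.pos_of_ne_zero hr0
          have : indMap T A x ∈ A := rt_spec hpos
          exact hx2 ⟨hxA, this, hx1⟩
        calc μ (A ∩ indMap T A ⁻¹' ((indMap T A)^[m] ⁻¹' B))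
            ≤ μ (A ∩ indMap T A ⁻¹' B') + μ ((A ∩ indMap T A ⁻¹' ((indMap T A)^[m] ⁻¹' B)) \ (A ∩ indMap T A ⁻¹' B')) := by
              apply le_trans (measure_mono ?_) (measure_union_le _ _)
              intro x hx
              by_cases h : x ∈ A ∩ indMap T A ⁻¹' B'
              · exact Or.inl h
              · exact Or.inr ⟨hx, h⟩
        _ = μ (A ∩ indMap T A ⁻¹' B') := by
              rw [measure_mono_null hdiff (null_nonreturn hT hA), add_zero]
      · apply measure_mono
        rintro x ⟨hxA, hx⟩
        exact ⟨hxA, hx.2⟩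
    rw [hstep, hE, indMap_preserving hT hTinv hright hA hB'meas inter_subset_left, ih]

theorem sum_tail (hT : MeasurePreserving T μ μ) (hTinv : MeasurePreserving Tinv μ μ)
    (hright : Function.LeftInverse T Tinv) (hA : MeasurableSet A)
    {ε : ℝ} (hε : 0 < ε) :
    ∑' (m : ℕ), μ (A ∩ {x | ε * m < (rt T A x : ℝ)}) ≠ ∞ := by
  classical
  have hmB : ∀ m : ℕ, A ∩ {x | ε * m < (rt T A x : ℝ)}
      = ⋃ k : ℕ, (if ε * m < (k : ℝ) then A ∩ rt T A ⁻¹' {k} else ∅) := by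
    intro m
    ext x
    simp only [mem_inter_iff, mem_setOf_eq, mem_iUnion]
    constructor
    · rintro ⟨hxA, hx⟩
      exact ⟨rt T A x, by rw [if_pos hx]; exact ⟨hxA, rfl⟩⟩
    · rintro ⟨k, hk⟩
      by_cases h : ε * m < (k : ℝ)
      · rw [if_pos h] at hk
        rcases hk with ⟨hxA, hk⟩
        simp only [mem_preimage, mem_singleton_iff] at hk
        exact ⟨hxA, by rw [hk]; exact h⟩
      · rw [if_neg h] at hk
        exact absurd hk (notMem_empty x)
  have hμB : ∀ m : ℕ, μ (A ∩ {x | ε * m < (rt T A x : ℝ)})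
      = ∑' (k : ℕ), (if ε * m < (k : ℝ) then μ (A ∩ rt T A ⁻¹' {k}) else 0) := by
    intro m
    rw [hmB m, measure_iUnion]
    · congr 1
      ext k
      by_cases h : ε * m < (k : ℝ) <;> simp [h]
    · intro k k' hne
      by_cases h : ε * m < (k : ℝ)
      · by_cases h' : ε * m < (k' : ℝ)
        · simp only [Function.onFun, if_pos h, if_pos h']
          rw [Set.disjoint_left]
          rintro x ⟨_, h1⟩ ⟨_, h2⟩
          simp only [mem_preimage, mem_singleton_iff] at h1 h2
          exact hne (h1 ▸ h2 ▸ rfl)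
        · simp [Function.onFun, if_neg h']
      · simp [Function.onFun, if_neg h]
    · intro k
      by_cases h : ε * m < (k : ℝ)
      · simpa [if_pos h] using measurableSet_Ak hT.measurable hA k
      · simp [if_neg h]
  set C : ℕ := ⌈1 / ε⌉₊ with hCdef
  have hbound : ∑' (m : ℕ), μ (A ∩ {x | ε * m < (rt T A x : ℝ)}) ≤ (C : ℝ≥0∞) := by
    calc ∑' (m : ℕ), μ (A ∩ {x | ε * m < (rt T A x : ℝ)})
        = ∑' (m : ℕ) (k : ℕ), (if ε * m < (k : ℝ) then μ (A ∩ rt T A ⁻¹' {k}) else 0) := by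
          exact tsum_congr hμB
    _ = ∑' (k : ℕ) (m : ℕ), (if ε * m < (k : ℝ) then μ (A ∩ rt T A ⁻¹' {k}) else 0) :=
          ENNReal.tsum_comm
    _ ≤ ∑' (k : ℕ), (k : ℝ≥0∞) * (C : ℝ≥0∞) * μ (A ∩ rt T A ⁻¹' {k}) := by
          apply ENNReal.tsum_le_tsum
          intro k
          have hzero : ∀ m : ℕ, m ∉ Finset.range ⌈(k : ℝ) / ε⌉₊ →
              (if ε * m < (k : ℝ) then μ (A ∩ rt T A ⁻¹' {k}) else 0) = 0 := by
            intro m hm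
            simp only [Finset.mem_range, not_lt] at hm
            rw [if_neg]
            intro hc
            have : (m : ℝ) < (k : ℝ) / ε := by
              rw [lt_div_iff₀ hε]
              linarith [mul_comm ε (m : ℝ)]
            exact absurd (Nat.lt_ceil.2 this) (by omega)
          rw [tsum_eq_sum hzero]
          have hle : ∀ m ∈ Finset.range ⌈(k : ℝ) / ε⌉₊,
              (if ε * m < (k : ℝ) then μ (A ∩ rt T A ⁻¹' {k}) else 0)
                ≤ μ (A ∩ rt T A ⁻¹' {k}) := by
            intro m _
            split
            · exact le_rfl
            · exact zero_le
          calc ∑ m ∈ Finset.range ⌈(k : ℝ) / ε⌉₊,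
                (if ε * m < (k : ℝ) then μ (A ∩ rt T A ⁻¹' {k}) else 0)
              ≤ ∑ m ∈ Finset.range ⌈(k : ℝ) / ε⌉₊, μ (A ∩ rt T A ⁻¹' {k}) :=
                Finset.sum_le_sum hle
          _ = (⌈(k : ℝ) / ε⌉₊ : ℝ≥0∞) * μ (A ∩ rt T A ⁻¹' {k}) := by
                rw [Finset.sum_const, Finset.card_range, nsmul_eq_mul]
          _ ≤ (k : ℝ≥0∞) * (C : ℝ≥0∞) * μ (A ∩ rt T A ⁻¹' {k}) := by
                apply mul_le_mul_left
                have : ⌈(k : ℝ) / ε⌉₊ ≤ k * C := by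
                  rw [Nat.ceil_le]
                  push_cast
                  calc (k : ℝ) / ε = (k : ℝ) * (1 / ε) := by ring
                  _ ≤ (k : ℝ) * (C : ℝ) := by
                      apply mul_le_mul_of_nonneg_left (Nat.le_ceil _) (Nat.cast_nonneg k)
                calc ((⌈(k : ℝ) / ε⌉₊ : ℝ≥0∞)) ≤ ((k * C : ℕ) : ℝ≥0∞) := by
                      exact_mod_cast Nat.cast_le.2 this
                _ = (k : ℝ≥0∞) * (C : ℝ≥0∞) := by push_cast; rfl
    _ = (C : ℝ≥0∞) * ∑' (k : ℕ), (k : ℝ≥0∞) * μ (A ∩ rt T A ⁻¹' {k}) := by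
          rw [← ENNReal.tsum_mul_left]
          congr 1
          ext k
          ring
    _ ≤ (C : ℝ≥0∞) * 1 := mul_le_mul_right (kac hT hTinv hright hA) _
    _ = (C : ℝ≥0∞) := mul_one _
  intro hc
  rw [hc] at hbound
  exact absurd hbound (by simp)


theorem ae_window_on_A (hT : MeasurePreserving T μ μ) (hTinv : MeasurePreserving Tinv μ μ)
    (hright : Function.LeftInverse T Tinv) (hA : MeasurableSet A)
    {ε : ℝ} (hε : 0 < ε) :
    ∀ᵐ x ∂μ, x ∈ A → ∃ N : ℕ, ∀ n ≥ N, ∃ k : ℕ,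
      n ≤ k ∧ (k : ℝ) ≤ n + ε * n ∧ T^[k] x ∈ A := by
  classical
  set S := indMap T A with hS
  set R := rt T A with hR
  have hmeasR0 : MeasurableSet (A ∩ R ⁻¹' {0}) := measurableSet_Ak hT.measurable hA 0
  have hF : ∀ m : ℕ, μ (A ∩ S^[m] ⁻¹' (A ∩ R ⁻¹' {0})) = 0 := by
    intro m
    rw [indMap_iter_preserving hT hTinv hright hA m hmeasR0 inter_subset_left]
    exact null_nonreturn hT hA
  have hFae : ∀ᵐ x ∂μ, ∀ m : ℕ, x ∉ A ∩ S^[m] ⁻¹' (A ∩ R ⁻¹' {0}) := by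
    rw [ae_all_iff]
    intro m
    exact measure_eq_zero_iff_ae_notMem.1 (hF m)
  have hmeasB : ∀ m : ℕ, MeasurableSet (A ∩ {x | ε * m < (R x : ℝ)}) := by
    intro m
    refine hA.inter ?_
    have heq : {x | ε * m < (R x : ℝ)} = R ⁻¹' {k : ℕ | ε * m < (k : ℝ)} := rfl
    rw [heq]
    exact (measurable_rt hT.measurable hA) ((Set.to_countable _).measurableSet)
  have hBC : ∀ᵐ x ∂μ, ∀ᶠ m in atTop, x ∉ A ∩ S^[m] ⁻¹' (A ∩ {y | ε * m < (R y : ℝ)}) := by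
    apply MeasureTheory.ae_eventually_notMem
    have heq : ∀ m : ℕ, μ (A ∩ S^[m] ⁻¹' (A ∩ {y | ε * m < (R y : ℝ)}))
        = μ (A ∩ {y | ε * m < (R y : ℝ)}) := fun m =>
      indMap_iter_preserving hT hTinv hright hA m (hmeasB m) inter_subset_left
    rw [tsum_congr heq]
    exact sum_tail hT hTinv hright hA hε
  filter_upwards [hFae, hBC] with x hx1 hx2 hxA
  have good : ∀ m : ℕ, S^[m] x ∈ A ∧ 0 < R (S^[m] x) := by
    intro m
    induction m with
    | zero =>
      refine ⟨by simpa using hxA, ?_⟩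
      by_contra h0
      push_neg at h0
      simp only [Function.iterate_zero, id_eq] at h0
      have hR0 : R x = 0 := by omega
      exact hx1 0 ⟨hxA, by simpa using ⟨hxA, hR0⟩⟩
    | succ m ih =>
      have hSm1 : S^[m+1] x = S (S^[m] x) := Function.iterate_succ_apply' S m x
      have hmem : S (S^[m] x) ∈ A := rt_spec ih.2
      refine ⟨by rw [hSm1]; exact hmem, ?_⟩
      by_contra h0
      push_neg at h0
      have hR0 : R (S^[m+1] x) = 0 := by omega
      refine hx1 (m+1) ⟨hxA, ?_⟩
      simp only [mem_preimage, mem_inter_iff, mem_singleton_iff]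
      exact ⟨by rw [hSm1]; exact hmem, hR0⟩
  obtain ⟨M, hM⟩ := eventually_atTop.1 hx2
  have hgap : ∀ m, M ≤ m → (R (S^[m] x) : ℝ) ≤ ε * m := by
    intro m hm
    by_contra hgt
    push_neg at hgt
    refine hM m hm ⟨hxA, ?_⟩
    simp only [mem_preimage, mem_inter_iff, mem_setOf_eq]
    exact ⟨(good m).1, hgt⟩
  set t : ℕ → ℕ := fun m => ∑ i ∈ Finset.range m, R (S^[i] x) with ht
  have htsucc : ∀ m, t (m+1) = t m + R (S^[m] x) := fun m => Finset.sum_range_succ _ m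
  have htiter : ∀ m, T^[t m] x = S^[m] x := by
    intro m
    induction m with
    | zero => simp [ht]
    | succ m ih =>
      rw [htsucc m, add_comm, Function.iterate_add_apply, ih,
        Function.iterate_succ_apply' S m x]
      rfl
  have htm : ∀ m, m ≤ t m := by
    intro m
    induction m with
    | zero => exact Nat.zero_le _
    | succ m ih =>
      have := (good m).2
      rw [htsucc m]
      omega
  refine ⟨t (max M 1), ?_⟩
  intro n hn
  set M' := max M 1 with hM'
  have hM'le : M' ≤ n := le_trans (htm M') hn
  have hPm₀ : t (Nat.findGreatest (fun m => t m ≤ n) n) ≤ n :=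
    Nat.findGreatest_spec (P := fun m => t m ≤ n) hM'le hn
  have hm₀ge : M' ≤ Nat.findGreatest (fun m => t m ≤ n) n := by
    by_contra h
    push_neg at h
    exact absurd hn (Nat.findGreatest_is_greatest (P := fun m => t m ≤ n) h hM'le)
  have hnext : n < t (Nat.findGreatest (fun m => t m ≤ n) n + 1) := by
    by_cases h : Nat.findGreatest (fun m => t m ≤ n) n + 1 ≤ n
    · have := Nat.findGreatest_is_greatest (P := fun m => t m ≤ n)
        (Nat.lt_succ_self _) h
      simp only [Nat.succ_eq_add_one] at this
      omega
    · have := htm (Nat.findGreatest (fun m => t m ≤ n) n + 1)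
      omega
  set m₀ := Nat.findGreatest (fun m => t m ≤ n) n with hm₀def
  refine ⟨t (m₀ + 1), by omega, ?_, ?_⟩
  · have h1 : (t m₀ : ℝ) ≤ n := by exact_mod_cast Nat.cast_le.2 hPm₀
    have h2 : (R (S^[m₀] x) : ℝ) ≤ ε * m₀ := hgap m₀ (le_trans (le_max_left _ _) hm₀ge)
    have h3 : (m₀ : ℝ) ≤ (n : ℝ) := by exact_mod_cast le_trans (htm m₀) hPm₀
    have h4 : ε * m₀ ≤ ε * n := mul_le_mul_of_nonneg_left h3 hε.le
    have h5 : (t (m₀+1) : ℝ) = (t m₀ : ℝ) + (R (S^[m₀] x) : ℝ) := by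
      rw [htsucc m₀]
      push_cast
      ring
    rw [h5]
    linarith
  · rw [htiter (m₀+1)]
    exact (good (m₀+1)).1


theorem ae_window (herg : Ergodic T μ) (hTinv : MeasurePreserving Tinv μ μ)
    (hright : Function.LeftInverse T Tinv) (hA : MeasurableSet A) (hApos : μ A ≠ 0)
    {ε : ℝ} (hε : 0 < ε) :
    ∀ᵐ x ∂μ, ∃ N : ℕ, ∀ n ≥ N, ∃ k : ℕ,
      n ≤ k ∧ (k : ℝ) ≤ n + ε * n ∧ T^[k] x ∈ A := by
  have hT : MeasurePreserving T μ μ := herg.toMeasurePreserving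
  set U := ⋃ n : ℕ, T^[n] ⁻¹' A with hU
  have hUmeas : MeasurableSet U :=
    MeasurableSet.iUnion fun n => (hT.measurable.iterate n) hA
  have hTU : T ⁻¹' U ⊆ U := by
    intro x hx
    simp only [hU, mem_preimage, mem_iUnion] at hx ⊢
    obtain ⟨n, hn⟩ := hx
    exact ⟨n + 1, by rw [Function.iterate_succ_apply]; exact hn⟩
  rcases herg.ae_empty_or_univ_of_preimage_ae_le' hUmeas.nullMeasurableSet
      hTU.eventuallyLE (measure_ne_top μ U) with hempty | huniv
  · exfalso
    have hU0 : μ U = 0 := (measure_congr hempty).trans measure_empty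
    have hAU : A ⊆ U := by
      intro x hx
      simp only [hU, mem_iUnion, mem_preimage]
      exact ⟨0, by simpa using hx⟩
    exact hApos (le_antisymm (le_trans (measure_mono hAU) hU0.le) zero_le)
  · have hUae : ∀ᵐ x ∂μ, x ∈ U := by
      have h0 : μ Uᶜ = 0 := ae_eq_univ.1 huniv
      exact (measure_eq_zero_iff_ae_notMem.1 h0).mono fun x hx => by simpa using hx
    have hQ := ae_window_on_A hT hTinv hright hA hε
    have hpull : ∀ᵐ x ∂μ, ∀ n : ℕ, T^[n] x ∈ A → ∃ N : ℕ, ∀ n' ≥ N, ∃ k : ℕ,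
        n' ≤ k ∧ (k : ℝ) ≤ n' + ε * n' ∧ T^[k] (T^[n] x) ∈ A := by
      rw [ae_all_iff]
      intro n
      exact (hT.iterate n).quasiMeasurePreserving.ae hQ
    filter_upwards [hUae, hpull] with x hxU hx
    obtain ⟨s, hs⟩ := mem_iUnion.1 hxU
    rw [mem_preimage] at hs
    obtain ⟨N, hN⟩ := hx s hs
    refine ⟨s + N, fun n hn => ?_⟩
    obtain ⟨k', hk1, hk2, hk3⟩ := hN (n - s) (by omega)
    refine ⟨k' + s, by omega, ?_, by rw [Function.iterate_add_apply]; exact hk3⟩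
    have hcast : ((n - s : ℕ) : ℝ) = (n : ℝ) - (s : ℝ) := by
      rw [Nat.cast_sub (by omega)]
    rw [hcast] at hk2
    have hsn : (0 : ℝ) ≤ (s : ℝ) := Nat.cast_nonneg s
    have hmul : ε * ((n : ℝ) - s) ≤ ε * n :=
      mul_le_mul_of_nonneg_left (by linarith) hε.le
    push_cast
    linarith

end Stmt12Aux

open MeasureTheory Real ENNReal

/-- Uniform recurrence: points return at a time `k ∈ [n, n+εn]` both to their own partition
    element and to a fixed positive-measure set `Λ₁`. -/
theorem stmt_12 {X : Type*} [MeasurableSpace X]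
    (μ : Measure X) [IsProbabilityMeasure μ]
    (T Tinv : X → X) (herg : Ergodic T μ)
    (hTinv : MeasurePreserving Tinv μ μ)
    (hleft : Function.LeftInverse Tinv T) (hright : Function.RightInverse Tinv T)
    (j : ℕ) (hj : 0 < j) (P : Fin j → Set X)
    (hPmeas : ∀ i, MeasurableSet (P i))
    (hPdisj : Pairwise (Function.onFun Disjoint P))
    (hPcover : (⋃ i, P i) = Set.univ)
    (Λ₁ : Set X) (hΛ₁meas : MeasurableSet Λ₁)
    (hΛ₁pos : ∀ i, 0 < μ (Λ₁ ∩ P i))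
    (ε δ : ℝ) (hε : 0 < ε) (hδ : 0 < δ) :
    ∃ n₂ : ℕ, 1 ≤ n₂ ∧ ∃ Λ₂ : Set X, MeasurableSet Λ₂ ∧
      1 - ENNReal.ofReal δ < μ Λ₂ ∧
      ∀ x ∈ Λ₂, ∀ n : ℕ, n₂ ≤ n → ∃ k : ℕ,
        n ≤ k ∧ (k : ℝ) ≤ n + ε * n ∧
        T^[k] x ∈ Λ₁ ∧ ∃ i, x ∈ P i ∧ T^[k] x ∈ P i := by
  classical
  have hT : MeasurePreserving T μ μ := herg.toMeasurePreserving
  set η : ℝ := min δ 1 with hη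
  have hηpos : 0 < η := lt_min hδ one_pos
  have hηle : η ≤ 1 := min_le_right _ _
  set c : ℝ≥0∞ := ENNReal.ofReal (η / (2 * (j + 1))) with hc
  have hcpos : 0 < c := ENNReal.ofReal_pos.2 (by positivity)
  set G : Fin j → ℕ → Set X := fun i N =>
    {x | ∀ n, N ≤ n → ∃ k : ℕ, n ≤ k ∧ (k : ℝ) ≤ n + ε * n ∧ T^[k] x ∈ Λ₁ ∩ P i} with hG
  have hGmeas : ∀ i N, MeasurableSet (G i N) := by
    intro i N
    have : G i N = ⋂ (n : ℕ), ⋂ (_ : N ≤ n),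
        ⋃ (k : ℕ), ⋃ (_ : n ≤ k ∧ (k : ℝ) ≤ n + ε * n), T^[k] ⁻¹' (Λ₁ ∩ P i) := by
      ext x
      simp only [hG, mem_setOf_eq, mem_iInter, mem_iUnion, mem_preimage]
      constructor
      · intro h n hn
        obtain ⟨k, h1, h2, h3⟩ := h n hn
        exact ⟨k, ⟨h1, h2⟩, h3⟩
      · intro h n hn
        obtain ⟨k, ⟨h1, h2⟩, h3⟩ := h n hn
        exact ⟨k, h1, h2, h3⟩
    rw [this]
    exact MeasurableSet.iInter fun n => MeasurableSet.iInter fun _ =>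
      MeasurableSet.iUnion fun k => MeasurableSet.iUnion fun _ =>
        (hT.measurable.iterate k) (hΛ₁meas.inter (hPmeas i))
  have hGmono : ∀ i, ∀ N N', N ≤ N' → G i N ⊆ G i N' := by
    intro i N N' hNN x hx n hn
    exact hx n (le_trans hNN hn)
  have hthresh : ∀ i : Fin j, ∃ N : ℕ, μ ((G i N)ᶜ) < c := by
    intro i
    have hae : ∀ᵐ x ∂μ, x ∈ ⋃ N : ℕ, G i N := by
      have := Stmt12Aux.ae_window herg hTinv hright
        (hΛ₁meas.inter (hPmeas i)) (hΛ₁pos i).ne' hε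
      exact this.mono fun x hx => by
        obtain ⟨N, hN⟩ := hx
        exact mem_iUnion.2 ⟨N, fun n hn => hN n hn⟩
    have hcompl0 : μ ((⋃ N : ℕ, G i N)ᶜ) = 0 := by
      rw [show ((⋃ N : ℕ, G i N)ᶜ) = {x | ¬ x ∈ ⋃ N : ℕ, G i N} from rfl]
      exact ae_iff.1 hae
    have htend : Filter.Tendsto (fun N => μ ((G i N)ᶜ)) Filter.atTop
        (nhds (μ (⋂ N : ℕ, (G i N)ᶜ))) := by
      apply tendsto_measure_iInter_atTop
      · exact fun N => (hGmeas i N).compl.nullMeasurableSet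
      · exact fun N N' hNN => compl_subset_compl.2 (hGmono i N N' hNN)
      · exact ⟨0, measure_ne_top μ _⟩
    rw [compl_iUnion] at hcompl0
    rw [hcompl0] at htend
    exact (htend.eventually (Iio_mem_nhds hcpos)).exists
  choose Nf hNf using hthresh
  set n₂ : ℕ := max 1 (Finset.univ.sup Nf) with hn₂
  set Λ₂ : Set X := ⋃ i, (P i ∩ G i n₂) with hΛ₂
  have hΛ₂meas : MeasurableSet Λ₂ :=
    MeasurableSet.iUnion fun i => (hPmeas i).inter (hGmeas i n₂)
  have hGc : ∀ i, μ ((G i n₂)ᶜ) < c := by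
    intro i
    have hle : Nf i ≤ n₂ := le_trans (Finset.le_sup (Finset.mem_univ i)) (le_max_right _ _)
    exact lt_of_le_of_lt (measure_mono (compl_subset_compl.2 (hGmono i (Nf i) n₂ hle))) (hNf i)
  have hsub : Λ₂ᶜ ⊆ ⋃ i, (G i n₂)ᶜ := by
    intro x hx
    have hxuniv : x ∈ ⋃ i, P i := by rw [hPcover]; exact mem_univ x
    obtain ⟨i, hi⟩ := mem_iUnion.1 hxuniv
    refine mem_iUnion.2 ⟨i, fun hGx => ?_⟩
    exact hx (mem_iUnion.2 ⟨i, hi, hGx⟩)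
  have hcomplle : μ Λ₂ᶜ ≤ ENNReal.ofReal (η / 2) := by
    calc μ Λ₂ᶜ ≤ ∑' i : Fin j, μ ((G i n₂)ᶜ) :=
          le_trans (measure_mono hsub) (measure_iUnion_le _)
    _ ≤ ∑' _i : Fin j, c := ENNReal.tsum_le_tsum fun i => (hGc i).le
    _ = (j : ℝ≥0∞) * c := by
          rw [tsum_fintype]
          simp [Finset.sum_const, Finset.card_univ, nsmul_eq_mul]
    _ ≤ ENNReal.ofReal (η / 2) := by
          rw [hc, show (j : ℝ≥0∞) = ENNReal.ofReal (j : ℝ) by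
            rw [ENNReal.ofReal_natCast], ← ENNReal.ofReal_mul (Nat.cast_nonneg j)]
          apply ENNReal.ofReal_le_ofReal
          have h2j : (j : ℝ) / (j + 1) ≤ 1 := by
            rw [div_le_one (by positivity)]
            linarith [Nat.cast_nonneg (α := ℝ) j]
          have heq : (j : ℝ) * (η / (2 * (j + 1))) = (η / 2) * ((j : ℝ) / (j + 1)) := by
            field_simp
          rw [heq]
          calc (η / 2) * ((j : ℝ) / (j + 1)) ≤ (η / 2) * 1 :=
                mul_le_mul_of_nonneg_left h2j (by positivity)
          _ = η / 2 := mul_one _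
  refine ⟨n₂, le_max_left _ _, Λ₂, hΛ₂meas, ?_, ?_⟩
  · have hμΛ₂ : μ Λ₂ = 1 - μ Λ₂ᶜ := by
      have h : μ Λ₂ + μ Λ₂ᶜ = 1 := by
        rw [measure_add_measure_compl hΛ₂meas, measure_univ]
      exact ENNReal.eq_sub_of_add_eq (measure_ne_top μ _) h
    have h2 : ENNReal.ofReal (1 - η / 2) ≤ μ Λ₂ := by
      rw [hμΛ₂, ENNReal.ofReal_sub _ (by positivity), ENNReal.ofReal_one]
      exact tsub_le_tsub_left hcomplle 1
    have h1 : (1 : ℝ≥0∞) - ENNReal.ofReal δ = ENNReal.ofReal (1 - δ) := by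
      rw [ENNReal.ofReal_sub _ hδ.le, ENNReal.ofReal_one]
    rw [h1]
    refine lt_of_lt_of_le ?_ h2
    rw [ENNReal.ofReal_lt_ofReal_iff (by linarith)]
    have : η ≤ δ := min_le_left _ _
    linarith
  · rintro x hx n hn
    obtain ⟨i, hxPi, hxGi⟩ := mem_iUnion.1 hx
    obtain ⟨k, hk1, hk2, hk3⟩ := hxGi n hn
    exact ⟨k, hk1, hk2, hk3.1, ⟨i, hxPi, hk3.2⟩⟩
end
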